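/- If h is a strictly increasing apart sequence of positive naturals, then the sets H₁ = {λ(h i) : i ∈ ℕ} and H₂ = {μ(h i) : i ∈ ℕ} are both infinite, and their increasing enumerations are given by λ(h 1), λ(h 2), ... and μ(h 1), μ(h 2), ... respectively; in particular λ(h 1) ≤ μ(h 1) < λ(h 2) ≤ μ(h 2) < ... -/

import Mathlib

/-- λ(n): the 2-adic valuation of n (least exponent in binary expansion). -/
def lam (n : ℕ) : ℕ := padicValNat 2 n

/-- μ(n): ⌊log₂ n⌋ (greatest exponent in binary expansion). -/
def mu (n : ℕ) : ℕ := Nat.log 2 n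

/-- Apartness condition for a sequence. -/
def Apart (h : ℕ → ℕ) : Prop := ∀ i j, i < j → mu (h i) < lam (h j)

/-- Sum of adjacent elements h i + h (i+1) + ... + h j. -/
def adjSum (h : ℕ → ℕ) (i j : ℕ) : ℕ := ∑ t ∈ Finset.Icc i j, h t

lemma lam_le_mu {n : ℕ} (hn : 0 < n) : lam n ≤ mu n := by
  have hd : (2 : ℕ) ^ lam n ∣ n := pow_padicValNat_dvd
  have : (2 : ℕ) ^ lam n ≤ n := Nat.le_of_dvd hn hd
  exact (Nat.le_log_iff_pow_le one_lt_two hn.ne').mpr this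

theorem lam_mu_enumeration (h : ℕ → ℕ) (hmono : StrictMono h) (hpos : ∀ i, 0 < h i)
    (hap : Apart h) :
    {x | ∃ i, x = lam (h i)}.Infinite ∧ {x | ∃ i, x = mu (h i)}.Infinite ∧
    StrictMono (fun i => lam (h i)) ∧ StrictMono (fun i => mu (h i)) ∧
    (∀ i, lam (h i) ≤ mu (h i)) ∧ (∀ i, mu (h i) < lam (h (i + 1))) := by
  have hle : ∀ i, lam (h i) ≤ mu (h i) := fun i => lam_le_mu (hpos i)
  have hlamSM : StrictMono (fun i => lam (h i)) := fun i j hij =>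
    lt_of_le_of_lt (hle i) (hap i j hij)
  have hmuSM : StrictMono (fun i => mu (h i)) := fun i j hij =>
    lt_of_lt_of_le (hap i j hij) (hle j)
  refine ⟨?_, ?_, hlamSM, hmuSM, hle, fun i => hap i (i+1) (Nat.lt_succ_self i)⟩
  · have : {x | ∃ i, x = lam (h i)} = Set.range (fun i => lam (h i)) := by
      ext x; simp [eq_comm]
    rw [this]
    exact Set.infinite_range_of_injective hlamSM.injective
  · have : {x | ∃ i, x = mu (h i)} = Set.range (fun i => mu (h i)) := by
      ext x; simp [eq_comm]
    rw [this]
    exact Set.infinite_range_of_injective hmuSM.injective
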